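/- Recursion (L1): for every σ ∈ {0,1,…,r}^N, 𝐟(σ·0) = (t^l + a)·𝐟(σ), where l = #{i : σ_i < r} and σ·0 denotes σ with the entry 0 appended. -/
import Mathlib


open MvPolynomial

noncomputable section

/-- The field `F = ℚ(q,a,t)` of rational functions in three variables over `ℚ`. -/
abbrev KRF : Type := FractionRing (MvPolynomial (Fin 3) ℚ)

/-- The variable `q` in `F`. -/
def fq : KRF := algebraMap (MvPolynomial (Fin 3) ℚ) KRF (X 0)
/-- The variable `a` in `F`. -/
def fa : KRF := algebraMap (MvPolynomial (Fin 3) ℚ) KRF (X 1)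
/-- The variable `t` in `F`. -/
def ft : KRF := algebraMap (MvPolynomial (Fin 3) ℚ) KRF (X 2)

/-- The number `|v|` of ones in a binary sequence. -/
def onesCt (v : List Bool) : ℕ := v.count true

/-- A p-family: a function on (balanced) pairs of binary sequences with values in
`F = ℚ(q,a,t)` satisfying the five recursion rules (1)-(5). -/
def IsPFamily (p : List Bool → List Bool → KRF) : Prop :=
  (∀ n : ℕ, p [] (List.replicate n false) = ((1 + fa) / (1 - fq)) ^ n) ∧
  (∀ m : ℕ, p (List.replicate m false) [] = ((1 + fa) / (1 - fq)) ^ m) ∧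
  (∀ v w : List Bool, onesCt v = onesCt w →
      p (v ++ [true]) (w ++ [true]) = (ft ^ onesCt v + fa) * p v w) ∧
  (∀ v w : List Bool, onesCt v = onesCt w + 1 →
      p (v ++ [false]) (w ++ [true]) = p v (true :: w)) ∧
  (∀ v w : List Bool, onesCt v + 1 = onesCt w →
      p (v ++ [true]) (w ++ [false]) = p (true :: v) w) ∧
  (∀ v w : List Bool, onesCt v = onesCt w →
      p (v ++ [false]) (w ++ [false]) =
        ft ^ (-(onesCt v : ℤ)) * p (true :: v) (true :: w) +
          fq * ft ^ (-(onesCt v : ℤ)) * p (false :: v) (false :: w))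

/-- The symbols `1`, `0`, `∗` used in fillings. -/
inductive Symb : Type
  | one : Symb
  | zero : Symb
  | star : Symb
deriving DecidableEq

/-- An admissible filling of the `r × N` grid (rows indexed top-to-bottom by `Fin r`,
columns left-to-right by `Fin N`): every row and every column contains at most one `1`,
every cell strictly below a `1` in the same column is `∗`, and every other cell is `0`
(i.e. every `∗` lies strictly below a `1` in its column). -/
def IsAdmissible {r N : ℕ} (T : Fin r → Fin N → Symb) : Prop :=
  (∀ (i : Fin r) (j j' : Fin N), T i j = Symb.one → T i j' = Symb.one → j = j') ∧
  (∀ (j : Fin N) (i i' : Fin r), T i j = Symb.one → T i' j = Symb.one → i = i') ∧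
  (∀ (i i' : Fin r) (j : Fin N), T i j = Symb.one → i < i' → T i' j = Symb.star) ∧
  (∀ (i : Fin r) (j : Fin N), T i j = Symb.star → ∃ i' : Fin r, i' < i ∧ T i' j = Symb.one)

/-- `σ(T)_j`: the number of cells labeled `0` in the `j`-th column of `T`. -/
def colZeros {r N : ℕ} (T : Fin r → Fin N → Symb) (j : Fin N) : ℕ :=
  (Finset.univ.filter (fun i => T i j = Symb.zero)).card

/-- `v(T)_j = 1` iff the `j`-th column of `T` is occupied (contains a `1`). -/
def vFun {r N : ℕ} (T : Fin r → Fin N → Symb) (j : Fin N) : Bool :=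
  decide (∃ i : Fin r, T i j = Symb.one)

/-- The binary sequence `v(T)` as a list. -/
def vList {r N : ℕ} (T : Fin r → Fin N → Symb) : List Bool :=
  (List.finRange N).map (vFun T)

/-- The binary sequence `w(T)`: read the entries of `T` from left to right along each row,
taking the rows from bottom to top, skipping all cells labeled `∗` (with `1 ↦ true`,
`0 ↦ false`). -/
def wList {r N : ℕ} (T : Fin r → Fin N → Symb) : List Bool :=
  ((List.finRange r).reverse.map (fun i =>
    (List.finRange N).filterMap (fun j =>
      match T i j with
      | Symb.one => some true
      | Symb.zero => some false
      | Symb.star => none))).flatten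

def canon (r : ℕ) (k : ℕ) (i : Fin r) : Symb :=
  if (i : ℕ) < k then Symb.zero else if (i : ℕ) = k then Symb.one else Symb.star


lemma canon_eq_one_iff {r k : ℕ} (i : Fin r) : canon r k i = Symb.one ↔ (i : ℕ) = k := by
  unfold canon; split_ifs with h1 h2 <;> simp_all <;> omega


lemma struct {r N : ℕ} (T : Fin r → Fin N → Symb) (hT : IsAdmissible T) (j : Fin N) (i : Fin r) :
    T i j = canon r (colZeros T j) i := by
  obtain ⟨h1, h2, h3, h4⟩ := hT
  by_cases hone : ∃ i0, T i0 j = Symb.one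
  · obtain ⟨i0, hi0⟩ := hone
    have key : ∀ i : Fin r, T i j = canon r (i0 : ℕ) i := by
      intro i
      rcases lt_trichotomy (i : ℕ) (i0 : ℕ) with h | h | h
      · have : T i j = Symb.zero := by
          cases hv : T i j with
          | one => exact absurd (h2 j i i0 hv hi0) (by intro he; subst he; omega)
          | zero => rfl
          | star =>
            obtain ⟨i', hi'lt, hi'one⟩ := h4 i j hv
            have := h2 j i' i0 hi'one hi0
            subst this; exact absurd (Fin.lt_def.mp hi'lt) (by omega)
        rw [this, canon, if_pos h]
      · have : i = i0 := Fin.ext h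
        subst this; rw [hi0, canon, if_neg (lt_irrefl _), if_pos rfl]
      · rw [h3 i0 i j hi0 (Fin.lt_def.mpr h)]
        rw [canon, if_neg (by omega), if_neg (by omega)]
    have hcz : colZeros T j = (i0 : ℕ) := by
      unfold colZeros
      have : Finset.univ.filter (fun i => T i j = Symb.zero) = Finset.Iio i0 := by
        ext i
        simp only [Finset.mem_filter, Finset.mem_univ, true_and, Finset.mem_Iio, key i,
          Fin.lt_def]
        unfold canon; split_ifs with h1 h2 <;> simp_all
      rw [this, Fin.card_Iio]
    rw [hcz]; exact key i
  · push_neg at hone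
    have hz : ∀ i, T i j = Symb.zero := by
      intro i
      cases hv : T i j with
      | one => exact absurd hv (hone i)
      | zero => rfl
      | star =>
        obtain ⟨i', _, hi'one⟩ := h4 i j hv
        exact absurd hi'one (hone i')
    have hcz : colZeros T j = r := by
      unfold colZeros
      rw [Finset.filter_true_of_mem (fun i _ => hz i)]
      simp
    rw [hcz, hz i]; unfold canon
    simp [i.isLt]


def canonT (r : ℕ) {N : ℕ} (σ : Fin N → ℕ) : Fin r → Fin N → Symb :=
  fun i j => canon r (σ j) i


lemma vFun_canonT {r N : ℕ} (σ : Fin N → ℕ) (j : Fin N) :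
    vFun (canonT r σ) j = decide (σ j < r) := by
  unfold vFun
  congr 1
  simp only [eq_iff_iff]
  constructor
  · rintro ⟨i, hi⟩
    have := (canon_eq_one_iff i).mp hi
    omega
  · intro h
    exact ⟨⟨σ j, h⟩, (canon_eq_one_iff _).mpr rfl⟩


lemma vList_canonT {r N : ℕ} (σ : Fin N → ℕ) :
    vList (canonT r σ) = (List.finRange N).map (fun j => decide (σ j < r)) :=
  List.map_congr_left (fun j _ => vFun_canonT σ j)


lemma vList_canonT_snoc {r N : ℕ} (hr : 1 ≤ r) (σ : Fin N → ℕ) :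
    vList (canonT r (Fin.snoc σ 0)) = vList (canonT r σ) ++ [true] := by
  rw [vList_canonT, vList_canonT, List.finRange_succ_last, List.map_append, List.map_map]
  congr 1
  · apply List.map_congr_left
    intro j _
    simp [Fin.snoc_castSucc]
  · simp only [List.map_cons, List.map_nil, Fin.snoc_last]
    simp [Nat.lt_of_lt_of_le Nat.zero_lt_one hr]


def rowf (r : ℕ) {N : ℕ} (σ : Fin N → ℕ) (i : Fin r) : List Bool :=
  (List.finRange N).filterMap (fun j =>
    match canon r (σ j) i with
    | Symb.one => some true
    | Symb.zero => some false
    | Symb.star => none)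


lemma wList_canonT_eq (r N : ℕ) (σ : Fin N → ℕ) :
    wList (canonT r σ) = ((List.finRange r).reverse.map (rowf r σ)).flatten := rfl


lemma rowf_snoc (r N : ℕ) (σ : Fin N → ℕ) (i : Fin r) :
    rowf r (Fin.snoc σ 0) i = rowf r σ i ++ (if (i : ℕ) = 0 then [true] else []) := by
  unfold rowf
  rw [List.finRange_succ_last, List.filterMap_append, List.filterMap_map]
  congr 1
  · apply List.filterMap_congr
    intro j _
    simp [Function.comp, Fin.snoc_castSucc]
  · have hc : canon r 0 i = if (i : ℕ) = 0 then Symb.one else Symb.star := by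
      rw [canon]; simp
    by_cases h0 : (i : ℕ) = 0
    · simp [List.filterMap, Fin.snoc_last, hc, h0]
    · simp [List.filterMap, Fin.snoc_last, hc, h0]


lemma wList_canonT_snoc (m N : ℕ) (σ : Fin N → ℕ) :
    wList (canonT (m + 1) (Fin.snoc σ 0)) = wList (canonT (m + 1) σ) ++ [true] := by
  rw [wList_canonT_eq, wList_canonT_eq, List.finRange_succ, List.reverse_cons,
    List.map_append, List.map_append, List.flatten_append, List.flatten_append]
  have htail : ((List.finRange m).map Fin.succ).reverse.map (rowf (m + 1) (Fin.snoc σ 0)) =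
      ((List.finRange m).map Fin.succ).reverse.map (rowf (m + 1) σ) := by
    apply List.map_congr_left
    intro i hi
    rw [List.mem_reverse, List.mem_map] at hi
    obtain ⟨a, _, rfl⟩ := hi
    rw [rowf_snoc]
    simp [Fin.val_succ]
  rw [htail]
  have h0 : rowf (m + 1) (Fin.snoc σ 0) (0 : Fin (m + 1)) =
      rowf (m + 1) σ (0 : Fin (m + 1)) ++ [true] := by
    rw [rowf_snoc]; simp
  simp [h0]


lemma card_filter_eq_countP {N : ℕ} (q : Fin N → Prop) [DecidablePred q] :
    (Finset.univ.filter q).card = (List.finRange N).countP (fun j => decide (q j)) := by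
  rw [Fin.univ_def]
  simp [Finset.filter, Finset.card, List.countP_eq_length_filter]


lemma onesCt_vList_canonT {r N : ℕ} (σ : Fin N → ℕ) :
    onesCt (vList (canonT r σ)) = (Finset.univ.filter (fun j => σ j < r)).card := by
  rw [vList_canonT, card_filter_eq_countP]
  unfold onesCt
  rw [List.count_eq_countP, List.countP_map]
  apply List.countP_congr
  intro j _
  simp [Function.comp]


lemma countP_filterMap' {α β : Type*} (g : α → Option β) (p : β → Bool) (l : List α) :
    (l.filterMap g).countP p = l.countP (fun a => ((g a).map p).getD false) := by
  induction l with
  | nil => simp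
  | cons x xs ih =>
    rw [List.filterMap_cons]
    cases hx : g x with
    | none => simp [List.countP_cons, hx, ih]
    | some b => simp [List.countP_cons, hx, ih]


lemma onesCt_rowf {r N : ℕ} (σ : Fin N → ℕ) (i : Fin r) :
    onesCt (rowf r σ i) = (Finset.univ.filter (fun j => σ j = (i : ℕ))).card := by
  unfold onesCt rowf
  rw [List.count_eq_countP, countP_filterMap', card_filter_eq_countP]
  apply List.countP_congr
  intro j _
  have := canon_eq_one_iff (r := r) (k := σ j) i
  cases hc : canon r (σ j) i <;> simp_all <;> omega


lemma onesCt_wList_canonT {r N : ℕ} (σ : Fin N → ℕ) :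
    onesCt (wList (canonT r σ)) = (Finset.univ.filter (fun j => σ j < r)).card := by
  rw [wList_canonT_eq]
  unfold onesCt
  rw [List.count_flatten, List.map_map]
  have h1 : ∀ L : List (Fin r), (L.map (List.count true ∘ rowf r σ)).sum
      = (L.map (fun (i : Fin r) => (Finset.univ.filter (fun j => σ j = (i : ℕ))).card)).sum := by
    intro L
    congr 1
    apply List.map_congr_left
    intro i _
    exact onesCt_rowf σ i
  rw [h1]
  have h2 : (((List.finRange r).reverse).map
        (fun (i : Fin r) => (Finset.univ.filter (fun j => σ j = (i : ℕ))).card)).sum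
      = ∑ i : Fin r, (Finset.univ.filter (fun j => σ j = (i : ℕ))).card := by
    rw [List.map_reverse, List.sum_reverse, ← Fin.sum_univ_def]
  rw [h2]
  rw [Finset.card_eq_sum_card_fiberwise (f := σ) (t := Finset.range r)
    (fun x hx => by simp at hx ⊢; exact hx)]
  rw [← Fin.sum_univ_eq_sum_range (fun k => ((Finset.univ.filter (fun j => σ j < r)).filter
    (fun x => σ x = k)).card) r]
  apply Finset.sum_congr rfl
  intro i _
  congr 1
  rw [Finset.filter_filter]
  apply Finset.filter_congr
  intro j _
  have hi := i.isLt
  constructor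
  · intro h
    first
      | exact h.2
      | exact ⟨by omega, h⟩
  · intro h
    first
      | exact h.2
      | exact ⟨by omega, h⟩


/-- Recursion (L1): `𝐟(σ·0) = (t^l + a)·𝐟(σ)` where `l = #{i : σ_i < r}`.
Here `𝐟(σ) = p(v(σ), w(σ))`, with `T` (resp. `T0`) the unique admissible filling whose
column-zero-counts are `σ` (resp. `σ·0`, i.e. `Fin.snoc σ 0`). -/
theorem f_recursion_L1 (p : List Bool → List Bool → KRF) (hp : IsPFamily p)
    (r : ℕ) (hr : 1 ≤ r) (N : ℕ) (σ : Fin N → ℕ) (hσ : ∀ i, σ i ≤ r)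
    (T : Fin r → Fin N → Symb) (hT : IsAdmissible T)
    (hTσ : ∀ j, colZeros T j = σ j)
    (T0 : Fin r → Fin (N + 1) → Symb) (hT0 : IsAdmissible T0)
    (hT0σ : ∀ j, colZeros T0 j = (Fin.snoc σ 0 : Fin (N + 1) → ℕ) j) :
    p (vList T0) (wList T0) =
      (ft ^ ((Finset.univ.filter (fun i => σ i < r)).card) + fa) *
        p (vList T) (wList T) := by
  have hTc : T = canonT r σ := by
    funext i j
    rw [struct T hT j i, hTσ j]
    rfl
  have hT0c : T0 = canonT r (Fin.snoc σ 0) := by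
    funext i j
    rw [struct T0 hT0 j i, hT0σ j]
    rfl
  obtain ⟨m, rfl⟩ : ∃ m, r = m + 1 := ⟨r - 1, by omega⟩
  rw [hTc, hT0c, vList_canonT_snoc hr, wList_canonT_snoc]
  have hb : onesCt (vList (canonT (m + 1) σ)) = onesCt (wList (canonT (m + 1) σ)) := by
    rw [onesCt_vList_canonT, onesCt_wList_canonT]
  rw [hp.2.2.1 (vList (canonT (m + 1) σ)) (wList (canonT (m + 1) σ)) hb, onesCt_vList_canonT]
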